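/- Let G(a) = Σ_{x ∈ T_m^*} χ^{-a}(x)·ψ̃_{l,m}(x) be the p-adic Gauss sum of level l, where T_m^* is the group of (p^m-1)-th roots of unity in the unramified extension O_m of ℤ_p, χ the tautological character of order p^m - 1 on T_m^*, and ψ̃_{l,m} an additive character of O_m of order p^l given by ψ̃_{l,m} = ψ̃_l ∘ Tr with ψ̃_l(1) = ζ_{p^l} = E(π_l). Then G(a) = (p^m - 1)·Σ λ_{n_0,l}···λ_{n_{m-1},l}, the sum over all tuples (n_0,...,n_{m-1}) of nonnegative integers with n_0 + p·n_1 + ... + p^{m-1}·n_{m-1} ≡ a (mod p^m - 1), where λ_{n,l} are the coefficients of θ_l(X) = E(π_l X). -/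

import Mathlib

open PowerSeries

/-- The Artin–Hasse logarithm `AH(X) = ∑_{i≥0} X^{p^i}/p^i` as a formal power series. -/
noncomputable def artinHasseLog (p : ℕ) [Fact p.Prime] : PowerSeries ℚ_[p] :=
  PowerSeries.mk fun n =>
    if p ^ (Nat.log p n) = n ∧ n ≠ 0 then ((p : ℚ_[p]) ^ (Nat.log p n))⁻¹ else 0

open Filter Topology in
private lemma exists_norm_bound {β : Type*} {K : Type*} [NormedAddCommGroup K] {g : β → K}
    (hg : Tendsto g cofinite (𝓝 0)) : ∃ C : ℝ, ∀ b, ‖g b‖ ≤ C := by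
  have hn : Tendsto (fun b => ‖g b‖) cofinite (𝓝 0) :=
    tendsto_zero_iff_norm_tendsto_zero.mp hg
  have h1 : {b | ¬ ‖g b‖ < 1}.Finite := by
    have h := hn (Iio_mem_nhds (by norm_num : (0:ℝ) < 1))
    rw [Filter.mem_map, Filter.mem_cofinite] at h
    exact h
  obtain ⟨C0, hC0⟩ := ((h1.image (fun b => ‖g b‖)).bddAbove)
  refine ⟨max 1 C0, fun b => ?_⟩
  by_cases hb : ‖g b‖ < 1
  · exact le_trans hb.le (le_max_left _ _)
  · exact le_trans (hC0 ⟨b, hb, rfl⟩) (le_max_right _ _)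

open Filter Topology in
private lemma summable_mul_prod {α β K : Type*} [NormedField K] [CompleteSpace K]
    [IsUltrametricDist K] {f : α → K} {g : β → K} (hf : Summable f) (hg : Summable g) :
    Summable (fun q : α × β => f q.1 * g q.2) := by
  apply NonarchimedeanAddGroup.summable_of_tendsto_cofinite_zero
  obtain ⟨Cf, hCf⟩ := exists_norm_bound hf.tendsto_cofinite_zero
  obtain ⟨Cg, hCg⟩ := exists_norm_bound hg.tendsto_cofinite_zero
  rw [← Filter.coprod_cofinite, Filter.coprod]
  rw [tendsto_sup]
  constructor
  · apply squeeze_zero_norm (a := fun q : α × β => ‖f q.1‖ * Cg)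
    · intro q
      rw [norm_mul]
      exact mul_le_mul_of_nonneg_left (hCg q.2) (norm_nonneg _)
    · have h1 : Tendsto (fun a => ‖f a‖) cofinite (𝓝 0) :=
        tendsto_zero_iff_norm_tendsto_zero.mp hf.tendsto_cofinite_zero
      have h2 : Tendsto (Prod.fst : α × β → α) (Filter.comap Prod.fst cofinite) cofinite :=
        tendsto_comap
      simpa using (h1.comp h2).mul_const Cg
  · apply squeeze_zero_norm (a := fun q : α × β => Cf * ‖g q.2‖)
    · intro q
      rw [norm_mul]
      exact mul_le_mul_of_nonneg_right (hCf q.1) (norm_nonneg _)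
    · have h1 : Tendsto (fun b => ‖g b‖) cofinite (𝓝 0) :=
        tendsto_zero_iff_norm_tendsto_zero.mp hg.tendsto_cofinite_zero
      have h2 : Tendsto (Prod.snd : α × β → β) (Filter.comap Prod.snd cofinite) cofinite :=
        tendsto_comap
      simpa using (h1.comp h2).const_mul Cf

set_option maxHeartbeats 1000000 in
private lemma hasSum_pi_prod {K : Type*} [NormedField K] [CompleteSpace K] [IsUltrametricDist K]
    (m : ℕ) : ∀ (f : Fin m → ℕ → K) (s : Fin m → K), (∀ i, HasSum (f i) (s i)) →
      HasSum (fun n : Fin m → ℕ => ∏ i, f i (n i)) (∏ i, s i) := by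
  induction m with
  | zero =>
    intro f s _
    have h0 : (fun n : Fin 0 → ℕ => ∏ i, f i (n i)) = fun _ => (1 : K) := by
      funext n; simp
    have h1 : (∏ i : Fin 0, s i) = 1 := by simp
    rw [h0, h1]
    exact hasSum_unique (fun _ : Fin 0 → ℕ => (1 : K))
  | succ m IHm =>
    intro f s hf
    have IH := IHm (fun i => f i.succ) (fun i => s i.succ) (fun i => hf i.succ)
    have hs1 := (hf 0).summable
    have hs2 := IH.summable
    have hsum := summable_mul_prod hs1 hs2
    have key := (hf 0).mul IH hsum
    rw [Fin.prod_univ_succ]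
    have heq : ((fun n : Fin (m + 1) → ℕ => ∏ i, f i (n i)) ∘
          (Fin.consEquiv fun _ : Fin (m + 1) => ℕ))
        = fun q : ℕ × (Fin m → ℕ) => f 0 q.1 * ∏ i : Fin m, f i.succ (q.2 i) := by
      funext q
      simp [Fin.consEquiv, Fin.prod_univ_succ]
    exact (Equiv.hasSum_iff _).mp (heq ▸ key)

private lemma sum_nthRoots_pow {K : Type*} [Field K] [IsAlgClosed K] [CharZero K]
    {N : ℕ} (hN : 0 < N) (t : ℕ) :
    ∑ x ∈ Polynomial.nthRootsFinset N (1 : K), x ^ t = if N ∣ t then (N : K) else 0 := by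
  classical
  haveI : NeZero N := ⟨hN.ne'⟩
  haveI : NeZero ((N : K)) := ⟨Nat.cast_ne_zero.mpr hN.ne'⟩
  obtain ⟨ζ, hζ⟩ := HasEnoughRootsOfUnity.exists_primitiveRoot K N
  have himg : Polynomial.nthRootsFinset N (1 : K) = (Finset.range N).image (ζ ^ ·) := by
    ext y
    simp only [Polynomial.mem_nthRootsFinset hN, Finset.mem_image, Finset.mem_range]
    constructor
    · intro hy
      obtain ⟨i, hi, hiy⟩ := hζ.eq_pow_of_pow_eq_one hy
      exact ⟨i, hi, hiy⟩
    · rintro ⟨i, _, rfl⟩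
      rw [← pow_mul, mul_comm, pow_mul, hζ.pow_eq_one, one_pow]
  rw [himg, Finset.sum_image (fun i hi j hj h =>
    hζ.pow_inj (Finset.mem_range.mp hi) (Finset.mem_range.mp hj) h)]
  have hcomm : ∀ j, (ζ ^ j) ^ t = (ζ ^ t) ^ j := fun j => by
    rw [← pow_mul, mul_comm, pow_mul]
  simp_rw [hcomm]
  by_cases h : N ∣ t
  · rw [if_pos h]
    have h1 : ζ ^ t = 1 := (hζ.pow_eq_one_iff_dvd t).mpr h
    simp [h1]
  · rw [if_neg h, geom_sum_eq (fun h1 => h ((hζ.pow_eq_one_iff_dvd t).mp h1)),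
      ← pow_mul, mul_comm t N, pow_mul, hζ.pow_eq_one, one_pow, sub_self, zero_div]

private lemma mod_cond {N a M : ℕ} (hN : 0 < N) :
    N ∣ ((N - 1) * a + M) ↔ M % N = a % N := by
  have key : (N - 1) * a + M + a = N * a + M := by
    have h2 : N - 1 + 1 = N := by omega
    calc (N - 1) * a + M + a = (N - 1 + 1) * a + M := by ring
      _ = N * a + M := by rw [h2]
  constructor
  · intro h
    have h0 : (N - 1) * a + M ≡ 0 [MOD N] := Nat.modEq_zero_iff_dvd.mpr h
    have h2 : (N - 1) * a + M + a ≡ 0 + a [MOD N] := h0.add_right a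
    rw [key, Nat.zero_add] at h2
    rwa [Nat.ModEq, Nat.mul_add_mod] at h2
  · intro h
    have h2 : N * a + M ≡ a [MOD N] := by rwa [Nat.ModEq, Nat.mul_add_mod]
    have h2' : (N - 1) * a + M + a ≡ 0 + a [MOD N] := by
      rw [key, Nat.zero_add]; exact h2
    exact Nat.modEq_zero_iff_dvd.mp (Nat.ModEq.add_right_cancel' a h2')

/-- The `p`-adic Gauss sum of level `l`,
`G(a) = ∑_{x ∈ T_m^*} χ^{-a}(x)·ψ̃_{l,m}(x)`, where `T_m^*` is the group of
`(p^m-1)`-th roots of unity, `χ(x) = x` the tautological character, and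
`ψ̃_{l,m}(x) = θ_l(x)·θ_l(x^p)⋯θ_l(x^{p^{m-1}})` with `θ_l(X) = E(π_l X)
= ∑ λ_{n,l} X^n`, satisfies
`G(a) = (p^m - 1)·∑ λ_{n₀,l}⋯λ_{n_{m-1},l}`, the sum over all tuples
`(n₀,…,n_{m-1})` of nonnegative integers with
`n₀ + p·n₁ + ⋯ + p^{m-1}·n_{m-1} ≡ a (mod p^m - 1)`. -/
theorem stmt_19 (p : ℕ) [Fact p.Prime] (l m : ℕ) (hl : 1 ≤ l) (hm : 1 ≤ m)
    {K : Type*} [NormedField K] [Algebra ℚ_[p] K] [IsAlgClosed K] [CompleteSpace K]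
    [IsUltrametricDist K]
    (hiso : ∀ x : ℚ_[p], ‖algebraMap ℚ_[p] K x‖ = ‖x‖)
    (E : PowerSeries ℚ_[p]) (hE0 : PowerSeries.constantCoeff E = 1)
    (hE : PowerSeries.derivative ℚ_[p] E
        = PowerSeries.derivative ℚ_[p] (artinHasseLog p) * E)
    (π : K) (hroot : HasSum (fun i : ℕ => π ^ p ^ i / (p : K) ^ i) 0)
    (hval : ‖π‖ = (p : ℝ) ^ (-(1 / ((p : ℝ) ^ l - (p : ℝ) ^ (l - 1)))))
    (lam : ℕ → K)
    (hlam : ∀ n, lam n = algebraMap ℚ_[p] K (PowerSeries.coeff n E) * π ^ n)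
    (θ : K → ℕ → K)
    (hθ : ∀ x ∈ Polynomial.nthRootsFinset (p ^ m - 1) (1 : K), ∀ i : ℕ,
      HasSum (fun n : ℕ => lam n * (x ^ p ^ i) ^ n) (θ x i))
    (a : ℕ) (ha : a + 2 ≤ p ^ m) :
    ∑ x ∈ Polynomial.nthRootsFinset (p ^ m - 1) (1 : K),
        (x⁻¹) ^ a * ∏ i ∈ Finset.range m, θ x i
      = ((p ^ m - 1 : ℕ) : K) *
        ∑' n : Fin m → ℕ,
          if (∑ i : Fin m, n i * p ^ (i : ℕ)) % (p ^ m - 1) = a % (p ^ m - 1)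
          then ∏ i : Fin m, lam (n i) else 0 := by
  classical
  haveI : CharZero K := charZero_of_injective_algebraMap (algebraMap ℚ_[p] K).injective
  set N := p ^ m - 1 with hNdef
  have hp1 : 1 < p := (Fact.out : p.Prime).one_lt
  have hpm : 1 < p ^ m := Nat.one_lt_pow (by omega) hp1
  have hN : 0 < N := by omega
  set S := Polynomial.nthRootsFinset N (1 : K) with hSdef
  have hx_sum : ∀ x ∈ S, HasSum
      (fun n : Fin m → ℕ =>
        (x⁻¹) ^ a * ((∏ i : Fin m, lam (n i)) * x ^ (∑ i : Fin m, n i * p ^ (i : ℕ))))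
      ((x⁻¹) ^ a * ∏ i ∈ Finset.range m, θ x i) := by
    intro x hx
    have h1 := hasSum_pi_prod m (fun i n => lam n * (x ^ p ^ (i : ℕ)) ^ n)
      (fun i => θ x (i : ℕ)) (fun i => hθ x hx (i : ℕ))
    have heq : (fun n : Fin m → ℕ => ∏ i : Fin m, (lam (n i) * (x ^ p ^ (i : ℕ)) ^ (n i)))
        = fun n : Fin m → ℕ =>
          (∏ i : Fin m, lam (n i)) * x ^ (∑ i : Fin m, n i * p ^ (i : ℕ)) := by
      funext n
      rw [Finset.prod_mul_distrib]
      congr 1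
      simp_rw [← pow_mul]
      rw [Finset.prod_pow_eq_pow_sum]
      congr 1
      exact Finset.sum_congr rfl fun i _ => mul_comm _ _
    have h2 : (∏ i : Fin m, θ x (i : ℕ)) = ∏ i ∈ Finset.range m, θ x i :=
      (Finset.prod_range fun i => θ x i).symm
    rw [heq, h2] at h1
    exact h1.mul_left ((x⁻¹) ^ a)
  have H := hasSum_sum hx_sum
  have hG : ∀ n : Fin m → ℕ,
      (∑ x ∈ S, (x⁻¹) ^ a * ((∏ i : Fin m, lam (n i)) * x ^ (∑ i : Fin m, n i * p ^ (i : ℕ))))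
      = ((N : ℕ) : K) *
        (if (∑ i : Fin m, n i * p ^ (i : ℕ)) % N = a % N
          then ∏ i : Fin m, lam (n i) else 0) := by
    intro n
    set M := ∑ i : Fin m, n i * p ^ (i : ℕ) with hM
    set c := ∏ i : Fin m, lam (n i) with hc
    have step : ∀ x ∈ S, (x⁻¹) ^ a * (c * x ^ M) = c * x ^ ((N - 1) * a + M) := by
      intro x hx
      have hx1 : x ^ N = 1 := (Polynomial.mem_nthRootsFinset hN 1).mp hx
      have hinv : x⁻¹ = x ^ (N - 1) := by
        apply inv_eq_of_mul_eq_one_right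
        have h2 : N - 1 + 1 = N := by omega
        rw [← pow_succ', h2, hx1]
      rw [hinv, ← pow_mul, pow_add]
      ring
    rw [Finset.sum_congr rfl step, ← Finset.mul_sum, sum_nthRoots_pow hN ((N - 1) * a + M)]
    simp only [mod_cond hN]
    split_ifs with h <;> ring
  calc ∑ x ∈ S, (x⁻¹) ^ a * ∏ i ∈ Finset.range m, θ x i
      = ∑' n : Fin m → ℕ,
          ∑ x ∈ S, (x⁻¹) ^ a *
            ((∏ i : Fin m, lam (n i)) * x ^ (∑ i : Fin m, n i * p ^ (i : ℕ))) :=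
        H.tsum_eq.symm
    _ = ∑' n : Fin m → ℕ, ((N : ℕ) : K) *
          (if (∑ i : Fin m, n i * p ^ (i : ℕ)) % N = a % N
            then ∏ i : Fin m, lam (n i) else 0) := tsum_congr hG
    _ = ((N : ℕ) : K) *
          ∑' n : Fin m → ℕ,
            (if (∑ i : Fin m, n i * p ^ (i : ℕ)) % N = a % N
              then ∏ i : Fin m, lam (n i) else 0) := tsum_mul_left
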